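/- Let p be an odd prime and b₁,…,b₄ nonzero elements of F_p with b₁+b₂ = b₃+b₄ and b₁^(−1)+b₂^(−1) = b₃^(−1)+b₄^(−1). Then the tuple (b₁², b₂², b₃², b₄²) lies in the variety V^Δ, i.e., for each i ∈ {1,2,3,4}, the number of indices j with b_j² = b_i² is even. -/
import Mathlib


open scoped BigOperators

lemma even_count_aux {F : Type*} [Field F] [DecidableEq F] (b : Fin 4 → F)
    (h02 : b 0 ^ 2 = b 2 ^ 2) (h13 : b 1 ^ 2 = b 3 ^ 2) :
    ∀ i : Fin 4,
      Even ((Finset.univ.filter (fun j : Fin 4 => b j ^ 2 = b i ^ 2)).card) := by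
  intro i
  have hi : b i ^ 2 = b 0 ^ 2 ∨ b i ^ 2 = b 1 ^ 2 := by
    fin_cases i
    · exact Or.inl rfl
    · exact Or.inr rfl
    · exact Or.inl h02.symm
    · exact Or.inr h13.symm
  rw [Finset.card_filter, Fin.sum_univ_four]
  rcases hi with hi | hi <;> rw [hi] <;> simp only [← h02, ← h13]
  · by_cases hx : b 1 ^ 2 = b 0 ^ 2 <;> simp [hx]; try decide
  · by_cases hx : b 0 ^ 2 = b 1 ^ 2 <;> simp [hx]; try decide

lemma even_count_aux' {F : Type*} [Field F] [DecidableEq F] (b : Fin 4 → F)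
    (h01 : b 0 ^ 2 = b 1 ^ 2) (h23 : b 2 ^ 2 = b 3 ^ 2) :
    ∀ i : Fin 4,
      Even ((Finset.univ.filter (fun j : Fin 4 => b j ^ 2 = b i ^ 2)).card) := by
  intro i
  have hi : b i ^ 2 = b 0 ^ 2 ∨ b i ^ 2 = b 2 ^ 2 := by
    fin_cases i
    · exact Or.inl rfl
    · exact Or.inl h01.symm
    · exact Or.inr rfl
    · exact Or.inr h23.symm
  rw [Finset.card_filter, Fin.sum_univ_four]
  rcases hi with hi | hi <;> rw [hi] <;> simp only [← h01, ← h23]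
  · by_cases hx : b 2 ^ 2 = b 0 ^ 2 <;> simp [hx]; try decide
  · by_cases hx : b 0 ^ 2 = b 2 ^ 2 <;> simp [hx]; try decide

lemma even_count_aux'' {F : Type*} [Field F] [DecidableEq F] (b : Fin 4 → F)
    (h03 : b 0 ^ 2 = b 3 ^ 2) (h12 : b 1 ^ 2 = b 2 ^ 2) :
    ∀ i : Fin 4,
      Even ((Finset.univ.filter (fun j : Fin 4 => b j ^ 2 = b i ^ 2)).card) := by
  intro i
  have hi : b i ^ 2 = b 0 ^ 2 ∨ b i ^ 2 = b 1 ^ 2 := by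
    fin_cases i
    · exact Or.inl rfl
    · exact Or.inr rfl
    · exact Or.inr h12.symm
    · exact Or.inl h03.symm
  rw [Finset.card_filter, Fin.sum_univ_four]
  rcases hi with hi | hi <;> rw [hi] <;> simp only [← h03, ← h12]
  · by_cases hx : b 1 ^ 2 = b 0 ^ 2 <;> simp [hx]; try decide
  · by_cases hx : b 0 ^ 2 = b 1 ^ 2 <;> simp [hx]; try decide

/-- Lemma 6.4: for `p` an odd prime and nonzero `b₁,…,b₄ ∈ F_p` with `b₁+b₂ = b₃+b₄` and
`b₁⁻¹+b₂⁻¹ = b₃⁻¹+b₄⁻¹`, the tuple `(b₁²,…,b₄²)` lies in the diagonal variety `V^Δ`: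
for each `i`, the number of `j` with `b_j² = b_i²` is even. -/
theorem stmt_15 (p : ℕ) (hp : p.Prime) (hodd : Odd p) (b : Fin 4 → ZMod p)
    (hb : ∀ i, b i ≠ 0)
    (hsum : b 0 + b 1 = b 2 + b 3)
    (hinv : (b 0)⁻¹ + (b 1)⁻¹ = (b 2)⁻¹ + (b 3)⁻¹) :
    ∀ i : Fin 4,
      Even ((Finset.univ.filter (fun j : Fin 4 => b j ^ 2 = b i ^ 2)).card) := by
  haveI : Fact p.Prime := ⟨hp⟩
  by_cases hs : b 0 + b 1 = 0
  · have h01 : b 0 ^ 2 = b 1 ^ 2 := by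
      have h : b 1 = -b 0 := by linear_combination hs
      rw [h]; ring
    have h23 : b 2 ^ 2 = b 3 ^ 2 := by
      have h : b 3 = -b 2 := by linear_combination hs - hsum
      rw [h]; ring
    exact even_count_aux' b h01 h23
  · have e : (b 0 + b 1) * (b 2 * b 3) = (b 2 + b 3) * (b 0 * b 1) := by
      field_simp [hb 0, hb 1, hb 2, hb 3] at hinv
      linear_combination hinv
    rw [hsum] at e
    have hprod : b 2 * b 3 = b 0 * b 1 :=
      mul_left_cancel₀ (by rwa [← hsum]) e
    have hroot : (b 2 - b 0) * (b 2 - b 1) = 0 := by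
      linear_combination (-(b 2)) * hsum - hprod
    rcases mul_eq_zero.mp hroot with h | h
    · have h20 : b 2 = b 0 := by linear_combination h
      have h31 : b 3 = b 1 := by linear_combination -hsum - h
      exact even_count_aux b (by rw [h20]) (by rw [h31])
    · have h21 : b 2 = b 1 := by linear_combination h
      have h30 : b 3 = b 0 := by linear_combination -hsum - h
      exact even_count_aux'' b (by rw [← h30]) (by rw [← h21])
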